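/- Let m, n ≥ 3 and let L' and L be regular languages (over possibly different alphabets) with quotient complexities m and n respectively. Then the quotient complexity of the product L'·L satisfies κ(L'·L) ≤ m·2^n + 2^(n-1). -/

import Mathlib

/-- The alphabet of a language: letters occurring in some word of `L`. -/
def alphabetOf {α : Type*} (L : Language α) : Set α :=
  {a | ∃ u v : List α, u ++ [a] ++ v ∈ L}

/-- The left quotient of `L` by a word `w`. -/
def leftQuotient {α : Type*} (L : Language α) (w : List α) : Language α :=
  {x | w ++ x ∈ L}

/-- The set of left quotients of `L` by words over the alphabet of `L`. -/
def quotientSet {α : Type*} (L : Language α) : Set (Language α) :=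
  {K | ∃ w : List α, (∀ a ∈ w, a ∈ alphabetOf L) ∧ K = leftQuotient L w}

/-- `L` is regular with quotient complexity `m`: the set of its left quotients
(by words over its own alphabet) is finite of cardinality exactly `m`. -/
def HasComplexity {α : Type*} (L : Language α) (m : ℕ) : Prop :=
  (quotientSet L).Finite ∧ (quotientSet L).ncard = m

/-- All words whose letters lie in `S`. -/
def starOf {α : Type*} (S : Set α) : Language α :=
  {w | ∀ a ∈ w, a ∈ S}

/-- A nonempty language `L` is a right ideal if `L · Σ_L^* = L`. -/
def IsRightIdeal {α : Type*} (L : Language α) : Prop :=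
  (∃ w, w ∈ L) ∧ L * starOf (alphabetOf L) = L

/-- A nonempty language `L` is a left ideal if `Σ_L^* · L = L`. -/
def IsLeftIdeal {α : Type*} (L : Language α) : Prop :=
  (∃ w, w ∈ L) ∧ starOf (alphabetOf L) * L = L

/-- A nonempty language `L` is a two-sided ideal if `Σ_L^* · L · Σ_L^* = L`. -/
def IsTwoSidedIdeal {α : Type*} (L : Language α) : Prop :=
  (∃ w, w ∈ L) ∧ starOf (alphabetOf L) * L * starOf (alphabetOf L) = L

/- ## Auxiliary lemmas -/

/-- Every letter of a word of `L` is in the alphabet of `L`. -/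
lemma mem_alphabetOf_of_mem {α : Type*} {L : Language α} {w : List α} (hw : w ∈ L)
    {a : α} (ha : a ∈ w) : a ∈ alphabetOf L := by
  obtain ⟨s, t, rfl⟩ := List.append_of_mem ha
  exact ⟨s, t, by simpa using hw⟩

/-- A nonempty left quotient is a member of the quotient set. -/
lemma leftQuotient_mem_quotientSet {α : Type*} {L : Language α} {w : List α}
    (h : leftQuotient L w ≠ (∅ : Set (List α))) : leftQuotient L w ∈ quotientSet L := by
  obtain ⟨x, hx⟩ := Set.nonempty_iff_ne_empty.2 h
  have hx' : w ++ x ∈ L := hx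
  exact ⟨w, fun a ha => mem_alphabetOf_of_mem hx' (by simp [ha]), rfl⟩

lemma leftQuotient_nil {α : Type*} (L : Language α) : leftQuotient L [] = L := by
  ext x
  show [] ++ x ∈ L ↔ x ∈ L
  simp

/-- Concatenation of a set of words with a language, as a plain set. -/
def catSet {α : Type*} (P : Set (List α)) (L : Language α) : Set (List α) :=
  {x | ∃ u ∈ P, ∃ y ∈ L, u ++ y = x}

/-- The fundamental quotient formula for products. -/
lemma leftQuotient_mul {α : Type*} (L' L : Language α) (w : List α) :
    catSet (leftQuotient L' w) L ∪
        ⋃₀ ({K | ∃ u v : List α, w = u ++ v ∧ u ∈ L' ∧ K = leftQuotient L v} :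
          Set (Set (List α)))
      = leftQuotient (L' * L) w := by
  ext x
  constructor
  · rintro (⟨c, hc, y, hy, hcy⟩ | ⟨K, ⟨u, v, rfl, hu, rfl⟩, hK⟩)
    · have hc' : w ++ c ∈ L' := hc
      exact Language.mem_mul.2 ⟨w ++ c, hc', y, hy, by rw [← hcy, List.append_assoc]⟩
    · have hK' : v ++ x ∈ L := hK
      exact Language.mem_mul.2 ⟨u, hu, v ++ x, hK', by rw [List.append_assoc]⟩
  · intro hx
    obtain ⟨u, hu, y, hy, huy⟩ := Language.mem_mul.1 hx
    rcases List.append_eq_append_iff.1 huy with ⟨v, hw, hyv⟩ | ⟨c, hc, hxc⟩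
    · exact Or.inr ⟨leftQuotient L v, ⟨u, v, hw, hu, rfl⟩, by
        show v ++ x ∈ L; rw [← hyv]; exact hy⟩
    · refine Or.inl ⟨c, ?_, y, hy, hxc.symm⟩
      show w ++ c ∈ L'; rw [← hc]; exact hu

/-- Cardinality of a set product. -/
lemma ncard_prod' {α β : Type*} (s : Set α) (t : Set β) :
    (s ×ˢ t).ncard = s.ncard * t.ncard := by
  rw [← Nat.card_coe_set_eq, ← Nat.card_coe_set_eq, ← Nat.card_coe_set_eq,
    ← Nat.card_prod]
  exact Nat.card_congr (Equiv.Set.prod s t)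

/-- Cardinality of the powerset of a finite set. -/
lemma ncard_powerset {β : Type*} {Q : Set β} (h : Q.Finite) :
    {T | T ⊆ Q}.ncard = 2 ^ Q.ncard := by
  have : Fintype Q := h.fintype
  have h1 : ({T | T ⊆ Q} : Set (Set β)).ncard = Nat.card (Set Q) := by
    rw [← Nat.card_coe_set_eq]
    exact Nat.card_congr (Equiv.Set.powerset Q)
  rw [h1, Nat.card_eq_fintype_card, Fintype.card_set, ← Nat.card_coe_set_eq,
    Nat.card_eq_fintype_card]

lemma arith_aux (a b p : ℕ) (hp : 1 ≤ p) :
    a * (2 * p) + (b + 1) * p + 1 * (2 * p) ≤ (a + (b + 1)) * (2 * p) + p := by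
  nlinarith

/-- unrestricted state complexity of product, upper bound. -/
theorem product_upper_bound {α : Type*} (m n : ℕ) (hm : 3 ≤ m) (hn : 3 ≤ n)
    (L' L : Language α) (hL' : HasComplexity L' m) (hL : HasComplexity L n) :
    (quotientSet (L' * L)).Finite ∧
      (quotientSet (L' * L)).ncard ≤ m * 2 ^ n + 2 ^ (n - 1) := by
  obtain ⟨hQ'fin, hQ'card⟩ := hL'
  obtain ⟨hQfin, hQcard⟩ := hL
  set Q' : Set (Set (List α)) := quotientSet L' with hQ'
  set Q : Set (Set (List α)) := quotientSet L with hQdef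
  -- re-elaborate the hypotheses at `Set (List α)` level
  have hQ'fin2 : Set.Finite (α := Set (List α)) Q' := hQ'fin
  have hQfin2 : Set.Finite (α := Set (List α)) Q := hQfin
  have hQ'card2 : Set.ncard (α := Set (List α)) Q' = m := hQ'card
  have hQcard2 : Set.ncard (α := Set (List α)) Q = n := hQcard
  -- basic arithmetic facts
  have hpow : 2 ^ n = 2 * 2 ^ (n - 1) := by
    conv_lhs => rw [show n = n - 1 + 1 by omega]
    rw [pow_succ]; ring
  have hpow1 : (1 : ℕ) ≤ 2 ^ (n - 1) := Nat.one_le_two_pow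
  -- degenerate case: empty product
  by_cases htriv : L' * L = (∅ : Set (List α))
  · have hqs : quotientSet (L' * L) = ({(∅ : Set (List α))} : Set (Set (List α))) := by
      ext K
      constructor
      · rintro ⟨w, -, rfl⟩
        have hK : leftQuotient (L' * L) w = (∅ : Set (List α)) := by
          apply Set.eq_empty_iff_forall_notMem.2
          intro x hx
          have hx' : w ++ x ∈ L' * L := hx
          rw [htriv] at hx'
          exact hx'
        exact hK
      · rintro rfl
        exact ⟨[], by simp, by rw [leftQuotient_nil]; exact htriv.symm⟩
    rw [hqs]
    refine ⟨Set.finite_singleton _, ?_⟩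
    erw [Set.ncard_singleton]
    calc 1 ≤ 2 ^ (n - 1) := hpow1
    _ ≤ m * 2 ^ n + 2 ^ (n - 1) := Nat.le_add_left _ _
  -- main case: both languages nonempty
  have hne : ∃ u y, u ∈ L' ∧ y ∈ L := by
    obtain ⟨x, hx⟩ := Set.nonempty_iff_ne_empty.2 htriv
    obtain ⟨u, hu, y, hy, -⟩ := Language.mem_mul.1 hx
    exact ⟨u, y, hu, hy⟩
  obtain ⟨w₀, y₀, hw₀, hy₀⟩ := hne
  have hLne : L ≠ (∅ : Set (List α)) := Set.nonempty_iff_ne_empty.1 ⟨y₀, hy₀⟩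
  have hLQ : (L : Set (List α)) ∈ Q := by
    have h1 : leftQuotient L [] ∈ quotientSet L :=
      leftQuotient_mem_quotientSet (by rw [leftQuotient_nil]; exact hLne)
    rw [leftQuotient_nil] at h1
    exact h1
  -- the three pieces
  set P : Set (Set (Set (List α))) := {T | T ⊆ Q} with hP
  set PL : Set (Set (Set (List α))) := {T | T ⊆ Q ∧ (L : Set (List α)) ∈ T} with hPL
  set Qf : Set (Set (List α)) := {q | q ∈ Q' ∧ [] ∈ q} with hQf
  set Qnf : Set (Set (List α)) := Q' \ {q | [] ∈ q} with hQnf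
  set A : Set (Set (List α) × Set (Set (List α))) :=
    (Qnf ×ˢ P) ∪ (Qf ×ˢ PL) ∪ (({(∅ : Set (List α))} : Set (Set (List α))) ×ˢ P) with hA
  set F : Set (List α) × Set (Set (List α)) → Set (List α) :=
    fun p => catSet p.1 L ∪ ⋃₀ p.2 with hF
  -- the key inclusion
  have hsub : quotientSet (L' * L) ⊆ F '' A := by
    rintro K ⟨w, -, rfl⟩
    set T : Set (Set (List α)) :=
      ({K | ∃ u v : List α, w = u ++ v ∧ u ∈ L' ∧ K = leftQuotient L v} :
        Set (Set (List α))) \ {(∅ : Set (List α))} with hT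
    have hTQ : T ⊆ Q := by
      rintro K' ⟨⟨u, v, rfl, hu, rfl⟩, hK'⟩
      exact leftQuotient_mem_quotientSet (fun h => hK' h)
    refine ⟨((leftQuotient L' w : Set (List α)), T), ?_, ?_⟩
    · by_cases hq : leftQuotient L' w = (∅ : Set (List α))
      · exact Or.inr (Set.mem_prod.2 ⟨hq, hTQ⟩)
      · have hq' : leftQuotient L' w ∈ Q' := leftQuotient_mem_quotientSet hq
        by_cases hf : [] ∈ leftQuotient L' w
        · refine Or.inl (Or.inr (Set.mem_prod.2 ⟨⟨hq', hf⟩, hTQ, ?_⟩))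
          have hwL' : w ∈ L' := by
            have h1 : w ++ [] ∈ L' := hf
            simpa using h1
          exact ⟨⟨w, [], by simp, hwL', (leftQuotient_nil L).symm⟩,
            fun hcon => hLne hcon⟩
        · exact Or.inl (Or.inl (Set.mem_prod.2 ⟨⟨hq', hf⟩, hTQ⟩))
    · show catSet (leftQuotient L' w) L ∪ ⋃₀ T = leftQuotient (L' * L) w
      rw [hT, Set.sUnion_diff_singleton_empty]
      exact leftQuotient_mul L' L w
  -- finiteness
  have hPfin : P.Finite := hQfin2.finite_subsets
  have hPLfin : PL.Finite := hPfin.subset (fun T hT => hT.1)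
  have hQnffin : Qnf.Finite := hQ'fin2.subset Set.diff_subset
  have hQffin : Qf.Finite := hQ'fin2.subset (fun q hq => hq.1)
  have hAfin : A.Finite :=
    ((hQnffin.prod hPfin).union (hQffin.prod hPLfin)).union
      ((Set.finite_singleton _).prod hPfin)
  have hfin : (quotientSet (L' * L)).Finite := (hAfin.image F).subset hsub
  refine ⟨hfin, ?_⟩
  -- cardinality bounds
  have hPcard : P.ncard = 2 ^ n := by rw [hP, ncard_powerset hQfin2, hQcard2]
  have hPLcard : PL.ncard ≤ 2 ^ (n - 1) := by
    have hinj : Set.InjOn (fun T => T \ {(L : Set (List α))}) PL := by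
      intro T₁ h₁ T₂ h₂ h
      dsimp only at h
      have h12 : T₁ \ {(L : Set (List α))} ∪ {(L : Set (List α))}
          = T₂ \ {(L : Set (List α))} ∪ {(L : Set (List α))} := by rw [h]
      erw [Set.diff_union_of_subset (Set.singleton_subset_iff.2 h₁.2),
        Set.diff_union_of_subset (Set.singleton_subset_iff.2 h₂.2)] at h12; exact h12
    have himg : (fun T => T \ {(L : Set (List α))}) '' PL
        ⊆ {T | T ⊆ Q \ {(L : Set (List α))}} := by
      rintro _ ⟨T, ⟨hTQ, -⟩, rfl⟩
      exact fun x hx => ⟨hTQ hx.1, hx.2⟩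
    calc PL.ncard = ((fun T => T \ {(L : Set (List α))}) '' PL).ncard :=
          (Set.ncard_image_of_injOn hinj).symm
      _ ≤ {T | T ⊆ Q \ {(L : Set (List α))}}.ncard :=
          Set.ncard_le_ncard himg (hQfin2.diff.finite_subsets)
      _ = 2 ^ (Q \ {(L : Set (List α))}).ncard := ncard_powerset hQfin2.diff
      _ = 2 ^ (n - 1) := by erw [Set.ncard_diff_singleton_of_mem hLQ, hQcard2]
  have hQfpos : 1 ≤ Qf.ncard := by
    have hne' : leftQuotient L' w₀ ≠ (∅ : Set (List α)) := by
      apply Set.nonempty_iff_ne_empty.1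
      exact ⟨[], show w₀ ++ [] ∈ L' by simpa using hw₀⟩
    have hq : leftQuotient L' w₀ ∈ Qf :=
      ⟨leftQuotient_mem_quotientSet hne', show w₀ ++ [] ∈ L' by simpa using hw₀⟩
    exact (Set.ncard_pos hQffin).2 ⟨_, hq⟩
  have hsplit : Qnf.ncard + Qf.ncard = m := by
    rw [← hQ'card2]
    have hunion : Qnf ∪ Qf = Q' := by
      ext q
      constructor
      · rintro (hq | hq)
        · exact hq.1
        · exact hq.1
      · intro hq
        by_cases hf : [] ∈ q
        · exact Or.inr ⟨hq, hf⟩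
        · exact Or.inl ⟨hq, hf⟩
    have hdisj : Disjoint Qnf Qf := by
      rw [Set.disjoint_left]
      rintro q ⟨-, hq⟩ ⟨-, hq'⟩
      exact hq hq'
    rw [← hunion, Set.ncard_union_eq hdisj hQnffin hQffin]
  -- put it all together
  obtain ⟨b, hb⟩ : ∃ b, Qf.ncard = b + 1 := ⟨Qf.ncard - 1, by omega⟩
  calc (quotientSet (L' * L)).ncard ≤ (F '' A).ncard :=
        Set.ncard_le_ncard hsub (hAfin.image F)
    _ ≤ A.ncard := Set.ncard_image_le hAfin
    _ ≤ (Qnf ×ˢ P).ncard + (Qf ×ˢ PL).ncard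
        + ((({(∅ : Set (List α))} : Set (Set (List α)))) ×ˢ P).ncard :=
        le_trans (Set.ncard_union_le _ _) (Nat.add_le_add_right (Set.ncard_union_le _ _) _)
    _ = Qnf.ncard * 2 ^ n + Qf.ncard * PL.ncard + 1 * 2 ^ n := by
        rw [ncard_prod', ncard_prod', ncard_prod', hPcard, Set.ncard_singleton]
    _ ≤ Qnf.ncard * 2 ^ n + Qf.ncard * 2 ^ (n - 1) + 1 * 2 ^ n :=
        Nat.add_le_add_right (Nat.add_le_add_left (Nat.mul_le_mul_left _ hPLcard) _) _
    _ ≤ m * 2 ^ n + 2 ^ (n - 1) := by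
        rw [hpow, ← hsplit, hb]
        exact arith_aux _ _ _ hpow1
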